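/- Neither 21 nor 28 is a perfect square; consequently, a rank-3 unimodular lattice cannot contain three vectors K, C₁, C₂ with K² = 7, K·C₁ = K·C₂ = 0, C₁² = C₂² = -2 and C₁·C₂ ∈ {0, 1}, such that they span the lattice rationally. -/
import Mathlib

lemma not_sq_aux (m : ℤ) (hm : 0 < m) (r : ℤ) (hr : m = r * r)
    (h : ∀ n : ℕ, n ≤ m.toNat → n * n ≠ m.toNat) : False := by
  have h1 : ((r.natAbs * r.natAbs : ℕ) : ℤ) = m := by rw [Int.natAbs_mul_self]; omega
  have h2 : r.natAbs * r.natAbs = m.toNat := by omega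
  have hb : r.natAbs ≤ m.toNat := by nlinarith [r.natAbs.le_refl]
  exact h r.natAbs hb h2

lemma not_sq_21 : ¬ IsSquare (21 : ℤ) := by
  rintro ⟨r, hr⟩
  exact not_sq_aux 21 (by norm_num) r hr (by decide)

lemma not_sq_28 : ¬ IsSquare (28 : ℤ) := by
  rintro ⟨r, hr⟩
  exact not_sq_aux 28 (by norm_num) r hr (by decide)

lemma vec_rep (v : Fin 3 → ℤ) :
    v = v 0 • Pi.single 0 1 + v 1 • Pi.single 1 1 + v 2 • Pi.single 2 1 := by
  funext j
  fin_cases j <;> simp [Pi.single_apply]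

theorem no_two_nodal_curves :
    ¬ IsSquare (21 : ℤ) ∧ ¬ IsSquare (28 : ℤ) ∧
    ∀ (B : (Fin 3 → ℤ) →ₗ[ℤ] (Fin 3 → ℤ) →ₗ[ℤ] ℤ),
      (∀ x y, B x y = B y x) →
      ((Matrix.of fun i j => B (Pi.single i 1) (Pi.single j 1)).det = 1 ∨
        (Matrix.of fun i j => B (Pi.single i 1) (Pi.single j 1)).det = -1) →
      ∀ K C₁ C₂ : Fin 3 → ℤ,
        B K K = 7 → B K C₁ = 0 → B K C₂ = 0 →
        B C₁ C₁ = -2 → B C₂ C₂ = -2 → (B C₁ C₂ = 0 ∨ B C₁ C₂ = 1) →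
        ¬ LinearIndependent ℤ ![K, C₁, C₂] := by
  refine ⟨not_sq_21, not_sq_28, ?_⟩
  intro B hsymm hdet K C₁ C₂ hKK hKC₁ hKC₂ hC₁C₁ hC₂C₂ hC₁C₂ _
  set G : Matrix (Fin 3) (Fin 3) ℤ :=
    Matrix.of fun i j => B (Pi.single i 1) (Pi.single j 1) with hG
  -- expansion of B in terms of G
  have hB : ∀ x y : Fin 3 → ℤ, B x y =
      x 0 * y 0 * G 0 0 + x 0 * y 1 * G 0 1 + x 0 * y 2 * G 0 2 +
      x 1 * y 0 * G 1 0 + x 1 * y 1 * G 1 1 + x 1 * y 2 * G 1 2 +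
      x 2 * y 0 * G 2 0 + x 2 * y 1 * G 2 1 + x 2 * y 2 * G 2 2 := by
    intro x y
    conv_lhs => rw [vec_rep x, vec_rep y]
    simp only [map_add, map_smul, LinearMap.add_apply, LinearMap.smul_apply, smul_eq_mul,
      hG, Matrix.of_apply]
    ring
  set v : Fin 3 → (Fin 3 → ℤ) := ![K, C₁, C₂] with hv
  set M : Matrix (Fin 3) (Fin 3) ℤ := Matrix.of fun i j => v i j with hM
  set Gram : Matrix (Fin 3) (Fin 3) ℤ := Matrix.of fun i j => B (v i) (v j) with hGram
  have hMGM : Gram = M * G * Matrix.transpose M := by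
    ext i j
    simp only [hGram, Matrix.of_apply, Matrix.mul_apply, Matrix.transpose_apply,
      Fin.sum_univ_three, hM, Matrix.of_apply, hB]
    ring
  have hdetGram : Gram.det = M.det * G.det * M.det := by
    rw [hMGM, Matrix.det_mul, Matrix.det_mul, Matrix.det_transpose]
  have hB21 : B C₁ K = 0 := by rw [hsymm]; exact hKC₁
  have hB31 : B C₂ K = 0 := by rw [hsymm]; exact hKC₂
  have hB32 : B C₂ C₁ = B C₁ C₂ := hsymm _ _
  have hGramdet : Gram.det = 7 * (4 - B C₁ C₂ * B C₁ C₂) := by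
    rw [Matrix.det_fin_three]
    simp only [hGram, Matrix.of_apply, hv, Matrix.cons_val_zero, Matrix.cons_val_one,
      Matrix.head_cons, Matrix.cons_val_two, Matrix.tail_cons,
      hKK, hKC₁, hKC₂, hC₁C₁, hC₂C₂, hB21, hB31, hB32]
    ring
  set d := M.det with hd
  set c := B C₁ C₂ with hc
  have key : 7 * (4 - c * c) = d * G.det * d := by rw [← hGramdet, hdetGram]
  rcases hC₁C₂ with h | h <;> rcases hdet with hg | hg <;>
    rw [h, hg] at key
  · exact not_sq_28 ⟨d, by linarith⟩
  · nlinarith [sq_nonneg d]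
  · exact not_sq_21 ⟨d, by linarith⟩
  · nlinarith [sq_nonneg d]
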